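/- Existence and uniqueness for the Poisson equation of the absorbing lazy pair walk: if W is irreducible, then for every symmetric N×N real matrix F and every h ∈ ℝ^N there exists exactly one N×N real matrix H satisfying the Poisson equation for the absorbing lazy pair walk with source F and prescribed diagonal h. In particular, the system of meeting-time equations τ_{ii} = 0 and τ_{ij} = 1 + ½ Σ_k P_{ik} τ_{kj} + ½ Σ_k P_{jk} τ_{ik} (for i ≠ j) has a unique solution τ. -/

import Mathlib

open Matrix

/-- Maximum principle: a solution of the homogeneous system with zero diagonal
is everywhere `≤ 0`. -/
lemma poisson_max_principle (N : ℕ) (P : Matrix (Fin N) (Fin N) ℝ)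
    (hPnn : ∀ i j, 0 ≤ P i j) (hrow : ∀ i, ∑ k, P i k = 1)
    (hconn : ∀ i j : Fin N, i ≠ j → ∃ (m : ℕ) (c : Fin (m + 1) → Fin N),
      c 0 = i ∧ c (Fin.last m) = j ∧ ∀ t : Fin m, 0 < P (c t.castSucc) (c t.succ))
    (H : Matrix (Fin N) (Fin N) ℝ)
    (hdiag : ∀ i, H i i = 0)
    (heq : ∀ i j, i ≠ j →
      H i j = (1 / 2) * ∑ k, P i k * H k j + (1 / 2) * ∑ k, P j k * H i k) :
    ∀ i j, H i j ≤ 0 := by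
  by_contra hcon
  push_neg at hcon
  obtain ⟨i0, j0, hpos⟩ := hcon
  obtain ⟨p, -, hmax⟩ := Finset.exists_max_image (Finset.univ : Finset (Fin N × Fin N))
    (fun p => H p.1 p.2) ⟨(i0, j0), Finset.mem_univ _⟩
  set M := H p.1 p.2 with hM
  have hMpos : 0 < M := lt_of_lt_of_le hpos (hmax (i0, j0) (Finset.mem_univ _))
  have hle : ∀ a b, H a b ≤ M := fun a b => hmax (a, b) (Finset.mem_univ _)
  -- propagation
  have prop : ∀ a b, a ≠ b → H a b = M → ∀ k, 0 < P a k → H k b = M := by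
    intro a b hab habM k hPk
    have hS1le : ∑ k, P a k * H k b ≤ M := by
      calc ∑ k, P a k * H k b ≤ ∑ k, P a k * M :=
            Finset.sum_le_sum (fun k _ => mul_le_mul_of_nonneg_left (hle k b) (hPnn a k))
        _ = M := by rw [← Finset.sum_mul, hrow, one_mul]
    have hS2le : ∑ k, P b k * H a k ≤ M := by
      calc ∑ k, P b k * H a k ≤ ∑ k, P b k * M :=
            Finset.sum_le_sum (fun k _ => mul_le_mul_of_nonneg_left (hle a k) (hPnn b k))
        _ = M := by rw [← Finset.sum_mul, hrow, one_mul]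
    have hEq := heq a b hab
    rw [habM] at hEq
    have hS1 : ∑ k, P a k * H k b = M := by linarith
    have hzero : ∑ k, P a k * (M - H k b) = 0 := by
      have : ∑ k, P a k * (M - H k b) = (∑ k, P a k) * M - ∑ k, P a k * H k b := by
        rw [Finset.sum_mul, ← Finset.sum_sub_distrib]
        exact Finset.sum_congr rfl (fun k _ => by ring)
      rw [this, hrow, hS1, one_mul, sub_self]
    have hterm := (Finset.sum_eq_zero_iff_of_nonneg
      (fun k _ => mul_nonneg (hPnn a k) (by linarith [hle k b]))).mp hzero k (Finset.mem_univ k)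
    have := mul_eq_zero.mp hterm
    rcases this with h' | h'
    · exact absurd h' (ne_of_gt hPk)
    · linarith
  -- the maximum is attained at an off-diagonal entry
  set a := p.1; set b := p.2
  have hab : a ≠ b := by
    intro h'
    rw [hM, h', hdiag] at hMpos
    exact lt_irrefl 0 hMpos
  obtain ⟨m, c, hc0, hclast, hcpos⟩ := hconn a b hab
  have hpath : ∀ t : Fin (m + 1), H (c t) b = M := by
    intro t
    induction t using Fin.induction with
    | zero => rw [hc0]
    | succ t ih =>
      have hne : c t.castSucc ≠ b := by
        intro h'
        rw [h', hdiag] at ih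
        exact absurd ih.symm (ne_of_gt hMpos)
      exact prop (c t.castSucc) b hne ih (c t.succ) (hcpos t)
  have := hpath (Fin.last m)
  rw [hclast, hdiag] at this
  exact absurd this.symm (ne_of_gt hMpos)

/-- Existence and uniqueness for the general inhomogeneous system. -/
lemma poisson_aux (N : ℕ) (P : Matrix (Fin N) (Fin N) ℝ)
    (hPnn : ∀ i j, 0 ≤ P i j) (hrow : ∀ i, ∑ k, P i k = 1)
    (hconn : ∀ i j : Fin N, i ≠ j → ∃ (m : ℕ) (c : Fin (m + 1) → Fin N),
      c 0 = i ∧ c (Fin.last m) = j ∧ ∀ t : Fin m, 0 < P (c t.castSucc) (c t.succ))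
    (G : Matrix (Fin N) (Fin N) ℝ) (h : Fin N → ℝ) :
    ∃! H : Matrix (Fin N) (Fin N) ℝ, (∀ i, H i i = h i) ∧ ∀ i j, i ≠ j →
      H i j = G i j + (1 / 2) * ∑ k, P i k * H k j + (1 / 2) * ∑ k, P j k * H i k := by
  set L : Matrix (Fin N) (Fin N) ℝ →ₗ[ℝ] Matrix (Fin N) (Fin N) ℝ :=
    { toFun := fun H => Matrix.of (fun i j =>
        if i = j then H i i
        else H i j - (1 / 2) * ∑ k, P i k * H k j - (1 / 2) * ∑ k, P j k * H i k)
      map_add' := by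
        intro A B
        funext i j
        simp only [Matrix.of_apply, Matrix.add_apply, mul_add, Finset.sum_add_distrib]
        split <;> ring
      map_smul' := by
        intro r A
        funext i j
        simp only [Matrix.of_apply, Matrix.smul_apply, smul_eq_mul, RingHom.id_apply]
        have e1 : ∑ k, P i k * (r * A k j) = r * ∑ k, P i k * A k j := by
          rw [Finset.mul_sum]; exact Finset.sum_congr rfl fun k _ => by ring
        have e2 : ∑ k, P j k * (r * A i k) = r * ∑ k, P j k * A i k := by
          rw [Finset.mul_sum]; exact Finset.sum_congr rfl fun k _ => by ring
        split
        · ring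
        · rw [e1, e2]; ring } with hL
  have hLinj : Function.Injective L := by
    rw [← LinearMap.ker_eq_bot, LinearMap.ker_eq_bot']
    intro H hH
    have hdiag : ∀ i, H i i = 0 := by
      intro i
      have := congrFun (congrFun hH i) i
      simpa [hL] using this
    have heq : ∀ i j, i ≠ j →
        H i j = (1 / 2) * ∑ k, P i k * H k j + (1 / 2) * ∑ k, P j k * H i k := by
      intro i j hij
      have := congrFun (congrFun hH i) j
      simp only [hL, LinearMap.coe_mk, AddHom.coe_mk, Matrix.of_apply, if_neg hij,
        Matrix.zero_apply] at this
      change (if i = j then H i i else H i j - (1 / 2) * ∑ k, P i k * H k j - (1 / 2) * ∑ k, P j k * H i k) = 0 at this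
      rw [if_neg hij] at this
      linarith
    have h1 := poisson_max_principle N P hPnn hrow hconn H hdiag heq
    have h2 := poisson_max_principle N P hPnn hrow hconn (-H)
      (fun i => by simp [hdiag i])
      (fun i j hij => by
        simp only [Matrix.neg_apply]
        have := heq i j hij
        rw [this]
        simp only [mul_neg, neg_mul, Finset.sum_neg_distrib]
        ring)
    funext i j
    simp only [Matrix.zero_apply]
    have := h2 i j
    simp only [Matrix.neg_apply] at this
    exact le_antisymm (h1 i j) (by linarith)
  have hLsurj : Function.Surjective L := (LinearMap.injective_iff_surjective).mp hLinj
  set T : Matrix (Fin N) (Fin N) ℝ :=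
    Matrix.of (fun i j => if i = j then h i else G i j) with hT
  obtain ⟨H0, hH0⟩ := hLsurj T
  have key : ∀ H : Matrix (Fin N) (Fin N) ℝ,
      ((∀ i, H i i = h i) ∧ ∀ i j, i ≠ j →
        H i j = G i j + (1 / 2) * ∑ k, P i k * H k j + (1 / 2) * ∑ k, P j k * H i k)
      ↔ L H = T := by
    intro H
    constructor
    · rintro ⟨hd, ho⟩
      funext i j
      simp only [hL, LinearMap.coe_mk, AddHom.coe_mk, Matrix.of_apply, hT]
      by_cases hij : i = j
      · subst hij; simp [hd i]
      · change (if i = j then H i i else H i j - (1 / 2) * ∑ k, P i k * H k j - (1 / 2) * ∑ k, P j k * H i k) = (if i = j then h i else G i j)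
        rw [if_neg hij, if_neg hij, ho i j hij]; ring
    · intro hLH
      constructor
      · intro i
        have := congrFun (congrFun hLH i) i
        simpa [hL, hT] using this
      · intro i j hij
        have := congrFun (congrFun hLH i) j
        simp only [hL, LinearMap.coe_mk, AddHom.coe_mk, Matrix.of_apply, hT,
          if_neg hij] at this
        change (if i = j then H i i else H i j - (1 / 2) * ∑ k, P i k * H k j - (1 / 2) * ∑ k, P j k * H i k) = G i j at this
        rw [if_neg hij] at this
        linarith
  refine ⟨H0, (key H0).mpr hH0, ?_⟩
  intro H hH
  exact hLinj (((key H).mp hH).trans hH0.symm)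

/-- Existence and uniqueness for the Poisson equation of the absorbing lazy pair walk:
if `W` is irreducible, then for every symmetric source `F` and prescribed diagonal `h`
there is exactly one solution `H`; in particular the meeting-time equations have a unique
solution `τ`. -/
theorem poisson_exists_unique
    (N : ℕ) (W : Matrix (Fin N) (Fin N) ℝ)
    (hWsymm : ∀ i j, W i j = W j i)
    (hWnn : ∀ i j, 0 ≤ W i j)
    (hWirred : ∀ i j : Fin N, i ≠ j → ∃ (m : ℕ) (c : Fin (m + 1) → Fin N),
      c 0 = i ∧ c (Fin.last m) = j ∧ ∀ t : Fin m, 0 < W (c t.castSucc) (c t.succ))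
    (w : Fin N → ℝ) (hw : ∀ i, w i = ∑ k, W i k)
    (hwpos : ∀ i, 0 < w i)
    (P : Matrix (Fin N) (Fin N) ℝ) (hP : ∀ i j, P i j = W i j / w i) :
    (∀ F : Matrix (Fin N) (Fin N) ℝ, (∀ i j, F i j = F j i) → ∀ h : Fin N → ℝ,
        ∃! H : Matrix (Fin N) (Fin N) ℝ, (∀ i, H i i = h i) ∧ ∀ i j, i ≠ j →
          H i j = F i j + (1 / 2) * ∑ k, P i k * H k j + (1 / 2) * ∑ k, P j k * H i k) ∧
      (∃! τ : Matrix (Fin N) (Fin N) ℝ, (∀ i, τ i i = 0) ∧ ∀ i j, i ≠ j →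
        τ i j = 1 + (1 / 2) * ∑ k, P i k * τ k j + (1 / 2) * ∑ k, P j k * τ i k) := by
  have hPnn : ∀ i j, 0 ≤ P i j := fun i j => by
    rw [hP]; exact div_nonneg (hWnn i j) (le_of_lt (hwpos i))
  have hrow : ∀ i, ∑ k, P i k = 1 := by
    intro i
    have : ∑ k, P i k = (∑ k, W i k) / w i := by
      rw [Finset.sum_div]
      exact Finset.sum_congr rfl (fun k _ => hP i k)
    rw [this, ← hw i, div_self (ne_of_gt (hwpos i))]
  have hconn : ∀ i j : Fin N, i ≠ j → ∃ (m : ℕ) (c : Fin (m + 1) → Fin N),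
      c 0 = i ∧ c (Fin.last m) = j ∧ ∀ t : Fin m, 0 < P (c t.castSucc) (c t.succ) := by
    intro i j hij
    obtain ⟨m, c, h0, h1, h2⟩ := hWirred i j hij
    exact ⟨m, c, h0, h1, fun t => by
      rw [hP]; exact div_pos (h2 t) (hwpos _)⟩
  constructor
  · intro F _ h
    exact poisson_aux N P hPnn hrow hconn F h
  · have := poisson_aux N P hPnn hrow hconn (Matrix.of (fun _ _ => (1 : ℝ))) (fun _ => 0)
    simpa using this
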